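/- Let ℓ(x) = (a·log log(x^α))^{1/(1−β)} for large x, where a > 0, α > 0, β ∈ [0,1). Then ℓ(x·ℓ(x))/ℓ(x) → 1 as x → ∞. -/

import Mathlib

open Filter Real Asymptotics

private theorem ell_aux (a α β : ℝ) (ha : 0 < a) (hα : 0 < α) (hβ1 : β < 1) :
    Filter.Tendsto (fun x : ℝ =>
      (a * Real.log (Real.log ((x * (a * Real.log (Real.log (x ^ α))) ^ ((1:ℝ)/(1-β))) ^ α)))
          ^ ((1:ℝ)/(1-β))
        / (a * Real.log (Real.log (x ^ α))) ^ ((1:ℝ)/(1-β))) Filter.atTop (nhds 1) := by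
  have hβ : 0 < 1 - β := by linarith
  set c : ℝ := (1:ℝ)/(1-β) with hcdef
  have hc0 : 0 < c := by positivity
  set L : ℝ → ℝ := fun x => Real.log (Real.log (x ^ α)) with hLdef
  have hLeq : L =ᶠ[atTop] (fun x => Real.log (α * Real.log x)) := by
    filter_upwards [eventually_gt_atTop (0:ℝ)] with x hx
    simp [hLdef, Real.log_rpow hx]
  have hαlog : Tendsto (fun x : ℝ => α * Real.log x) atTop atTop :=
    Tendsto.const_mul_atTop hα Real.tendsto_log_atTop
  have hL : Tendsto L atTop atTop :=
    Tendsto.congr' hLeq.symm (Real.tendsto_log_atTop.comp hαlog)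
  have hLo : L =o[atTop] Real.log := by
    have h1 : (fun x : ℝ => Real.log (α * Real.log x)) =o[atTop] (fun x : ℝ => α * Real.log x) :=
      Real.isLittleO_log_id_atTop.comp_tendsto hαlog
    have h2 : (fun x : ℝ => α * Real.log x) =O[atTop] Real.log :=
      isBigO_const_mul_self α _ _
    exact (h1.trans_isBigO h2).congr' hLeq.symm EventuallyEq.rfl
  have haLtop : Tendsto (fun x => a * L x) atTop atTop := Tendsto.const_mul_atTop ha hL
  have h3 : (fun x => Real.log (a * L x)) =o[atTop] (fun x => a * L x) :=
    Real.isLittleO_log_id_atTop.comp_tendsto haLtop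
  have h4 : (fun x => a * L x) =O[atTop] L := isBigO_const_mul_self a L atTop
  have h5 : (fun x => Real.log (a * L x)) =o[atTop] Real.log :=
    (h3.trans_isBigO h4).trans hLo
  set ε : ℝ → ℝ := fun x => c * Real.log (a * L x) / Real.log x with hεdef
  have hε : Tendsto ε atTop (nhds 0) := by
    have := (h5.const_mul_left c).tendsto_div_nhds_zero
    simpa [hεdef, mul_div_assoc] using this
  have hlog1 : Tendsto (fun x => Real.log (1 + ε x)) atTop (nhds 0) := by
    have hcont : ContinuousAt Real.log 1 := Real.continuousAt_log one_ne_zero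
    have h1 : Tendsto (fun x => 1 + ε x) atTop (nhds 1) := by
      simpa using tendsto_const_nhds.add hε
    simpa [Function.comp_def, Real.log_one] using hcont.tendsto.comp h1
  have hquot : Tendsto (fun x => Real.log (1 + ε x) / L x) atTop (nhds 0) :=
    hlog1.div_atTop hL
  have hmain : Tendsto (fun x => 1 + Real.log (1 + ε x) / L x) atTop (nhds 1) := by
    simpa using tendsto_const_nhds.add hquot
  have hrpow : Tendsto (fun t : ℝ => t ^ c) (nhds 1) (nhds (1:ℝ)) := by
    have := (Real.continuousAt_rpow_const 1 c (Or.inl one_ne_zero)).tendsto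
    simpa using this
  refine Tendsto.congr' ?_ (hrpow.comp hmain)
  have hev3 : ∀ᶠ x in atTop, -1 < ε x := hε.eventually (eventually_gt_nhds (by norm_num))
  have hev4 : ∀ᶠ x in atTop, 0 < 1 + Real.log (1 + ε x) / L x :=
    hmain.eventually (eventually_gt_nhds (by norm_num))
  filter_upwards [eventually_gt_atTop (1:ℝ), hL.eventually_gt_atTop 0, hev3, hev4]
    with x hx1 hLx hεx hpos
  have hx0 : (0:ℝ) < x := lt_trans one_pos hx1
  have hlogx : 0 < Real.log x := Real.log_pos hx1
  have haLx : 0 < a * L x := mul_pos ha hLx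
  have hellpos : 0 < (a * L x) ^ c := Real.rpow_pos_of_pos haLx c
  have hxell : 0 < x * (a * L x) ^ c := mul_pos hx0 hellpos
  have hεx' : ε x = c * Real.log (a * L x) / Real.log x := by rw [hεdef]
  have h1ε : 0 < 1 + ε x := by linarith
  have e1 : Real.log ((x * (a * L x) ^ c) ^ α) = α * Real.log (x * (a * L x) ^ c) :=
    Real.log_rpow hxell α
  have e2 : Real.log (x * (a * L x) ^ c) = Real.log x + c * Real.log (a * L x) := by
    rw [Real.log_mul hx0.ne' hellpos.ne', Real.log_rpow haLx]
  have e3 : α * (Real.log x + c * Real.log (a * L x)) = (α * Real.log x) * (1 + ε x) := by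
    rw [hεx']; field_simp
  have hαlogx : 0 < α * Real.log x := mul_pos hα hlogx
  have e4 : L (x * (a * L x) ^ c) = L x + Real.log (1 + ε x) := by
    have eLx : L x = Real.log (α * Real.log x) := by
      simp [hLdef, Real.log_rpow hx0]
    show Real.log (Real.log ((x * (a * L x) ^ c) ^ α)) = L x + Real.log (1 + ε x)
    rw [e1, e2, e3, Real.log_mul hαlogx.ne' h1ε.ne', eLx]
  have e5 : a * L (x * (a * L x) ^ c) = (a * L x) * (1 + Real.log (1 + ε x) / L x) := by
    rw [e4]; field_simp
  have efinal : (1 + Real.log (1 + ε x) / L x) ^ c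
      = (a * L (x * (a * L x) ^ c)) ^ c / (a * L x) ^ c := by
    rw [e5, Real.mul_rpow haLx.le hpos.le, mul_comm, mul_div_assoc, div_self hellpos.ne',
      mul_one]
  simpa only [hLdef, hεdef, Function.comp] using efinal

theorem ell_loglog_self_neglecting (a α β : ℝ) (ha : 0 < a) (hα : 0 < α)
    (hβ0 : 0 ≤ β) (hβ1 : β < 1) :
    let ell : ℝ → ℝ := fun x => (a * Real.log (Real.log (x ^ α))) ^ ((1:ℝ) / (1 - β))
    Filter.Tendsto (fun x => ell (x * ell x) / ell x) Filter.atTop (nhds 1) := by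
  intro ell
  exact ell_aux a α β ha hα hβ1
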